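/- For 0 < q < 1/2 and p = 1 - q, we have q²·[(1-p)·log(1-p) + (1+p)·log(1+p)] > p²·[(1-q)·log(1-q) + (1+q)·log(1+q)]. -/

import Mathlib

open Real Set

noncomputable def phifun (u : ℝ) : ℝ := (1+u) * Real.log (1+u) + (1-u) * Real.log (1-u)

lemma hasDerivAt_log1p {u : ℝ} (h1 : -1 < u) :
    HasDerivAt (fun u : ℝ => Real.log (1+u)) (1/(1+u)) u := by
  have hu : (1:ℝ) + u ≠ 0 := by linarith
  have hi : HasDerivAt (fun u : ℝ => 1 + u) 1 u := (hasDerivAt_id u).const_add 1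
  exact ((Real.hasDerivAt_log hu).comp u hi).congr_deriv (by ring)

lemma hasDerivAt_log1m {u : ℝ} (h2 : u < 1) :
    HasDerivAt (fun u : ℝ => Real.log (1-u)) (-(1/(1-u))) u := by
  have hu : (1:ℝ) - u ≠ 0 := by linarith
  have hi : HasDerivAt (fun u : ℝ => 1 - u) (-1) u := (hasDerivAt_id u).const_sub 1
  have := (Real.hasDerivAt_log hu).comp u hi
  exact this.congr_deriv (by ring)

lemma hasDerivAt_phifun {u : ℝ} (h1 : -1 < u) (h2 : u < 1) :
    HasDerivAt phifun (Real.log (1+u) - Real.log (1-u)) u := by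
  have hu1 : (1:ℝ) + u ≠ 0 := by linarith
  have hu2 : (1:ℝ) - u ≠ 0 := by linarith
  have ha : HasDerivAt (fun u : ℝ => 1 + u) 1 u := (hasDerivAt_id u).const_add 1
  have hb : HasDerivAt (fun u : ℝ => 1 - u) (-1) u := (hasDerivAt_id u).const_sub 1
  have t1 := ha.mul (hasDerivAt_log1p h1)
  have t2 := hb.mul (hasDerivAt_log1m h2)
  have := t1.add t2
  refine this.congr_deriv ?_
  field_simp
  ring

noncomputable def gfun (u : ℝ) : ℝ :=
  2*u/(1-u^2) - (Real.log (1+u) - Real.log (1-u))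

lemma hasDerivAt_gfun {u : ℝ} (h1 : -1 < u) (h2 : u < 1) :
    HasDerivAt gfun (4*u^2/(1-u^2)^2) u := by
  have hu1 : (1:ℝ) + u ≠ 0 := by linarith
  have hu2 : (1:ℝ) - u ≠ 0 := by linarith
  have hden : (1:ℝ) - u^2 ≠ 0 := by
    intro h; nlinarith
  have hnum : HasDerivAt (fun u : ℝ => 2*u) 2 u := by
    simpa using (hasDerivAt_id u).const_mul 2
  have hden' : HasDerivAt (fun u : ℝ => 1 - u^2) (-(2*u)) u := by
    have := (hasDerivAt_pow 2 u).const_sub 1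
    simpa using this
  have hq := hnum.div hden' hden
  have := hq.sub ((hasDerivAt_log1p h1).sub (hasDerivAt_log1m h2))
  refine this.congr_deriv ?_
  field_simp
  ring

lemma gfun_pos {x : ℝ} (h0 : 0 < x) (h1 : x < 1) : 0 < gfun x := by
  have hmono : StrictMonoOn gfun (Icc 0 x) := by
    apply strictMonoOn_of_deriv_pos (convex_Icc 0 x)
    · intro u hu
      have hu1 : -1 < u := by have := hu.1; linarith
      have hu2 : u < 1 := by have := hu.2; linarith
      exact (hasDerivAt_gfun hu1 hu2).continuousAt.continuousWithinAt
    · intro u hu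
      rw [interior_Icc] at hu
      have hu1 : -1 < u := by have := hu.1; linarith
      have hu2 : u < 1 := by have := hu.2; linarith
      rw [(hasDerivAt_gfun hu1 hu2).deriv]
      have h1u : (0:ℝ) < 1 - u^2 := by nlinarith [hu.1, hu.2]
      have hd : (0:ℝ) < (1-u^2)^2 := by positivity
      have hn : (0:ℝ) < 4*u^2 := by nlinarith [hu.1]
      exact div_pos hn hd
  have h := hmono (left_mem_Icc.mpr h0.le) (right_mem_Icc.mpr h0.le) h0
  have hg0 : gfun 0 = 0 := by simp [gfun]
  linarith

noncomputable def bfun (u : ℝ) : ℝ :=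
  u * (Real.log (1+u) - Real.log (1-u)) - 2 * phifun u

lemma hasDerivAt_bfun {u : ℝ} (h1 : -1 < u) (h2 : u < 1) :
    HasDerivAt bfun (gfun u) u := by
  have hu1 : (1:ℝ) + u ≠ 0 := by linarith
  have hu2 : (1:ℝ) - u ≠ 0 := by linarith
  have t1 := (hasDerivAt_id u).mul ((hasDerivAt_log1p h1).sub (hasDerivAt_log1m h2))
  have t2 := (hasDerivAt_phifun h1 h2).const_mul 2
  have := t1.sub t2
  refine this.congr_deriv ?_
  unfold gfun
  have hden : (1:ℝ) - u^2 ≠ 0 := by intro h; nlinarith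
  simp only [Pi.sub_apply, id]
  field_simp [hden]
  ring

lemma bfun_pos {x : ℝ} (h0 : 0 < x) (h1 : x < 1) : 0 < bfun x := by
  have hmono : StrictMonoOn bfun (Icc 0 x) := by
    apply strictMonoOn_of_deriv_pos (convex_Icc 0 x)
    · intro u hu
      have hu1 : -1 < u := by have := hu.1; linarith
      have hu2 : u < 1 := by have := hu.2; linarith
      exact (hasDerivAt_bfun hu1 hu2).continuousAt.continuousWithinAt
    · intro u hu
      rw [interior_Icc] at hu
      have hu1 : -1 < u := by have := hu.1; linarith
      have hu2 : u < 1 := by have := hu.2; linarith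
      rw [(hasDerivAt_bfun hu1 hu2).deriv]
      exact gfun_pos hu.1 (by linarith [hu.2])
  have h := hmono (left_mem_Icc.mpr h0.le) (right_mem_Icc.mpr h0.le) h0
  have hb0 : bfun 0 = 0 := by simp [bfun, phifun]
  linarith

noncomputable def psifun (u : ℝ) : ℝ := phifun u / u^2

lemma hasDerivAt_psifun {u : ℝ} (h0 : 0 < u) (h1 : u < 1) :
    HasDerivAt psifun (u * bfun u / (u^2)^2) u := by
  have hu : u^2 ≠ 0 := by positivity
  have hsq : HasDerivAt (fun u : ℝ => u^2) (2*u) u := by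
    simpa using hasDerivAt_pow 2 u
  have := (hasDerivAt_phifun (by linarith) h1).div hsq hu
  refine this.congr_deriv ?_
  unfold bfun phifun
  field_simp

lemma psifun_mono {a b : ℝ} (h0 : 0 < a) (hab : a < b) (hb1 : b < 1) :
    psifun a < psifun b := by
  have hmono : StrictMonoOn psifun (Icc a b) := by
    apply strictMonoOn_of_deriv_pos (convex_Icc a b)
    · intro u hu
      have hu1 : 0 < u := lt_of_lt_of_le h0 hu.1
      have hu2 : u < 1 := lt_of_le_of_lt hu.2 hb1
      exact (hasDerivAt_psifun hu1 hu2).continuousAt.continuousWithinAt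
    · intro u hu
      rw [interior_Icc] at hu
      have hu1 : 0 < u := h0.trans hu.1
      have hu2 : u < 1 := hu.2.trans hb1
      rw [(hasDerivAt_psifun hu1 hu2).deriv]
      exact div_pos (mul_pos hu1 (bfun_pos hu1 hu2)) (by positivity)
  exact hmono (left_mem_Icc.mpr hab.le) (right_mem_Icc.mpr hab.le) hab

lemma key_ineq {a b : ℝ} (h0 : 0 < a) (hab : a < b) (hb1 : b < 1) :
    b^2 * phifun a < a^2 * phifun b := by
  have h := psifun_mono h0 hab hb1
  unfold psifun at h
  rw [div_lt_div_iff₀ (pow_pos h0 2) (pow_pos (h0.trans hab) 2)] at h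
  linarith

theorem stmt1 (q p : ℝ) (hq : 0 < q) (hq2 : q < 1/2) (hp : p = 1 - q) :
    q^2 * ((1 - p) * Real.log (1 - p) + (1 + p) * Real.log (1 + p)) >
      p^2 * ((1 - q) * Real.log (1 - q) + (1 + q) * Real.log (1 + q)) := by
  subst hp
  have key := key_ineq hq (show q < 1 - q by linarith) (show (1:ℝ) - q < 1 by linarith)
  unfold phifun at key
  have e : (1:ℝ) - (1 - q) = q := by ring
  rw [e] at key ⊢
  linarith
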